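/- arXiv:1512.09033 — 2 statements merged into one kernel-verified Lean document; each statement's English description precedes it below -/
import Mathlib

section
/- ∑_{n=1}^∞ (-1)^{F_n} · F_{F_{n-1}} / (F_{F_n} · F_{F_{n+1}}) = (1 − √5)/2. -/
open Filter Finset Topology

private noncomputable def gRatio (n : ℕ) : ℝ :=
  (Nat.fib (Nat.fib (n + 1) + 1) : ℝ) / (Nat.fib (Nat.fib (n + 1)) : ℝ)

/-- d'Ocagne-style identity, by induction on `k`. -/
private lemma fib_key (k : ℕ) : ∀ d : ℕ,
    (Nat.fib (k + d) : ℝ) * Nat.fib (k + 1) - (Nat.fib (k + d + 1) : ℝ) * Nat.fib k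
      = (-1 : ℝ) ^ k * Nat.fib d := by
  induction k with
  | zero => intro d; simp
  | succ k ih =>
    intro d
    have hk := ih d
    have e2 : k + 1 + d + 1 = k + d + 2 := by omega
    have e1 : k + 1 + d = k + d + 1 := by omega
    have e3 : k + 1 + 1 = k + 2 := by omega
    rw [e2, e1, e3]
    have h3 : (Nat.fib (k + 2) : ℝ) = Nat.fib k + Nat.fib (k + 1) := by
      rw [Nat.fib_add_two]; push_cast; ring
    have h4 : (Nat.fib (k + d + 2) : ℝ) = Nat.fib (k + d) + Nat.fib (k + d + 1) := by
      rw [Nat.fib_add_two]; push_cast; ring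
    rw [h3, h4, pow_succ]
    nlinarith [hk]

private lemma term_eq (n : ℕ) :
    (-1 : ℝ) ^ (Nat.fib (n + 1)) *
        ((Nat.fib (Nat.fib n) : ℝ) /
          ((Nat.fib (Nat.fib (n + 1)) : ℝ) * (Nat.fib (Nat.fib (n + 2)) : ℝ)))
      = gRatio n - gRatio (n + 1) := by
  have key := fib_key (Nat.fib (n + 1)) (Nat.fib n)
  have hsum : Nat.fib (n + 1) + Nat.fib n = Nat.fib (n + 2) := by
    rw [Nat.fib_add_two]; ring
  rw [hsum] at key
  have h1 : (0 : ℝ) < Nat.fib (Nat.fib (n + 1)) := by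
    exact_mod_cast Nat.fib_pos.mpr (Nat.fib_pos.mpr (Nat.succ_pos n))
  have h2 : (0 : ℝ) < Nat.fib (Nat.fib (n + 2)) := by
    exact_mod_cast Nat.fib_pos.mpr (Nat.fib_pos.mpr (Nat.succ_pos (n + 1)))
  unfold gRatio
  have e : n + 1 + 1 = n + 2 := by omega
  rw [e]
  rw [div_sub_div _ _ (ne_of_gt h1) (ne_of_gt h2), mul_div_assoc',
    div_eq_div_iff (by positivity) (by positivity)]
  linear_combination (-((Nat.fib (Nat.fib (n + 1)) : ℝ) * (Nat.fib (Nat.fib (n + 2)) : ℝ))) * key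

private lemma inv_fib_antitone (n : ℕ) :
    (1 : ℝ) / Nat.fib (Nat.fib (n + 2)) ≤ 1 / Nat.fib (Nat.fib (n + 1)) := by
  have h1 : (0 : ℝ) < Nat.fib (Nat.fib (n + 1)) := by
    exact_mod_cast Nat.fib_pos.mpr (Nat.fib_pos.mpr (Nat.succ_pos n))
  apply one_div_le_one_div_of_le h1
  exact_mod_cast Nat.fib_mono (Nat.fib_mono (Nat.le_succ _))

/-- Summability via telescoping comparison. -/
private lemma summable_f :
    Summable (fun n : ℕ => (-1 : ℝ) ^ (Nat.fib (n + 1)) *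
        ((Nat.fib (Nat.fib n) : ℝ) /
          ((Nat.fib (Nat.fib (n + 1)) : ℝ) * (Nat.fib (Nat.fib (n + 2)) : ℝ)))) := by
  set u : ℕ → ℝ := fun n => 1 / Nat.fib (Nat.fib (n + 1)) with hu
  have husum : Summable (fun n => u n - u (n + 1)) := by
    apply summable_of_sum_range_le (c := u 0)
    · intro n; simpa [hu] using sub_nonneg.mpr (inv_fib_antitone n)
    · intro n
      rw [Finset.sum_range_sub' u n]
      have hun : 0 ≤ u n := by positivity
      linarith
  apply Summable.of_norm_bounded_eventually_nat husum
  filter_upwards [Filter.eventually_ge_atTop 3] with n hn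
  have h1 : (0 : ℝ) < Nat.fib (Nat.fib (n + 1)) := by
    exact_mod_cast Nat.fib_pos.mpr (Nat.fib_pos.mpr (Nat.succ_pos n))
  have h2 : (0 : ℝ) < Nat.fib (Nat.fib (n + 2)) := by
    exact_mod_cast Nat.fib_pos.mpr (Nat.fib_pos.mpr (Nat.succ_pos (n + 1)))
  have hnum : Nat.fib (Nat.fib n) + Nat.fib (Nat.fib (n + 1)) ≤ Nat.fib (Nat.fib (n + 2)) := by
    set a := Nat.fib (n + 1) with ha
    set b := Nat.fib n with hb
    have hab : Nat.fib (n + 2) = a + b := by rw [Nat.fib_add_two]; omega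
    have hb2 : 2 ≤ b := by
      have h3n : Nat.fib 3 ≤ Nat.fib n := Nat.fib_mono hn
      exact le_trans (by norm_num) h3n
    have hba : b ≤ a := Nat.fib_mono (Nat.le_succ n)
    calc Nat.fib b + Nat.fib a
        ≤ Nat.fib (a + 1) + Nat.fib a := by
          have hba1 : b ≤ a + 1 := by omega
          exact Nat.add_le_add_right (Nat.fib_mono hba1) _
      _ = Nat.fib (a + 2) := by rw [Nat.fib_add_two]; omega
      _ ≤ Nat.fib (a + b) := Nat.fib_mono (by omega)
      _ = Nat.fib (Nat.fib (n + 2)) := by rw [hab]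
  have hnumR : (Nat.fib (Nat.fib n) : ℝ)
      ≤ (Nat.fib (Nat.fib (n + 2)) : ℝ) - Nat.fib (Nat.fib (n + 1)) := by
    have h : ((Nat.fib (Nat.fib n) : ℝ) + Nat.fib (Nat.fib (n + 1)))
        ≤ Nat.fib (Nat.fib (n + 2)) := by exact_mod_cast hnum
    linarith
  rw [Real.norm_eq_abs, abs_mul, abs_pow, abs_neg, abs_one, one_pow, one_mul,
    abs_div, abs_of_nonneg (by positivity : (0:ℝ) ≤ (Nat.fib (Nat.fib n) : ℝ)),
    abs_of_nonneg (by positivity :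
      (0:ℝ) ≤ (Nat.fib (Nat.fib (n + 1)) : ℝ) * Nat.fib (Nat.fib (n + 2)))]
  rw [hu]
  show _ ≤ (1 : ℝ) / Nat.fib (Nat.fib (n + 1)) - 1 / Nat.fib (Nat.fib (n + 1 + 1))
  rw [show n + 1 + 1 = n + 2 by omega,
    div_sub_div _ _ (ne_of_gt h1) (ne_of_gt h2),
    div_le_div_iff₀ (by positivity) (by positivity)]
  nlinarith [mul_le_mul_of_nonneg_right hnumR (le_of_lt (mul_pos h1 h2))]

private lemma fib_ratio_tendsto :
    Tendsto (fun m : ℕ => (Nat.fib (m + 1) : ℝ) / Nat.fib m) atTop (𝓝 Real.goldenRatio) := by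
  have hφ : (0:ℝ) < Real.goldenRatio := Real.goldenRatio_pos
  set r : ℝ := Real.goldenConj / Real.goldenRatio with hr_def
  have hrabs : |r| < 1 := by
    rw [hr_def, abs_div, abs_of_pos hφ, abs_of_neg Real.goldenConj_neg, div_lt_one hφ]
    nlinarith [Real.goldenRatio_add_goldenConj, Real.one_lt_goldenRatio]
  have hr0 : Tendsto (fun m : ℕ => r ^ m) atTop (𝓝 0) :=
    tendsto_pow_atTop_nhds_zero_iff.mpr hrabs
  have hlim : Tendsto (fun m : ℕ => (Real.goldenRatio - Real.goldenConj * r ^ m) / (1 - r ^ m))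
      atTop (𝓝 Real.goldenRatio) := by
    have hnum : Tendsto (fun m : ℕ => Real.goldenRatio - Real.goldenConj * r ^ m) atTop
        (𝓝 Real.goldenRatio) := by
      have h := (hr0.const_mul Real.goldenConj).const_sub Real.goldenRatio
      simpa using h
    have hden : Tendsto (fun m : ℕ => 1 - r ^ m) atTop (𝓝 1) := by
      have h := hr0.const_sub 1
      simpa using h
    have h := hnum.div hden one_ne_zero
    simpa using (by exact h : Tendsto (fun m : ℕ => (Real.goldenRatio - Real.goldenConj * r ^ m) / (1 - r ^ m)) atTop (𝓝 (Real.goldenRatio / 1)))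
  refine hlim.congr' ?_
  filter_upwards [Filter.eventually_ge_atTop 1] with m hm
  have hfibn : 0 < Nat.fib m := Nat.fib_pos.mpr hm
  have hfib : (0 : ℝ) < Nat.fib m := by exact_mod_cast hfibn
  have h5 : (0:ℝ) < Real.sqrt 5 := Real.sqrt_pos.mpr (by norm_num)
  have hb1 : (Nat.fib m : ℝ) = (Real.goldenRatio ^ m - Real.goldenConj ^ m) / Real.sqrt 5 :=
    Real.coe_fib_eq m
  have hb2 : (Nat.fib (m + 1) : ℝ)
      = (Real.goldenRatio ^ (m + 1) - Real.goldenConj ^ (m + 1)) / Real.sqrt 5 :=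
    Real.coe_fib_eq (m + 1)
  have hφm : (0:ℝ) < Real.goldenRatio ^ m := pow_pos hφ m
  have hrm : r ^ m = Real.goldenConj ^ m / Real.goldenRatio ^ m := by
    rw [hr_def, div_pow]
  have hden_ne : 1 - r ^ m ≠ 0 := by
    intro h0
    have hψm : Real.goldenConj ^ m = Real.goldenRatio ^ m * r ^ m := by
      rw [hrm]; field_simp
    have hfz : (Nat.fib m : ℝ) = Real.goldenRatio ^ m * (1 - r ^ m) / Real.sqrt 5 := by
      rw [hb1, hψm]; ring
    rw [h0] at hfz
    simp at hfz
    omega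
  have key : (Nat.fib (m + 1) : ℝ) / Nat.fib m
      = (Real.goldenRatio - Real.goldenConj * r ^ m) / (1 - r ^ m) := by
    rw [div_eq_div_iff (ne_of_gt hfib) hden_ne, hb1, hb2, hrm]
    field_simp
    ring
  exact key.symm

/-- `∑_{n=1}^∞ (-1)^{F_n} F_{F_{n-1}} / (F_{F_n} F_{F_{n+1}}) = (1 - √5)/2`. -/
theorem statement9 :
    ∑' n : ℕ, (-1 : ℝ) ^ (Nat.fib (n + 1)) *
        ((Nat.fib (Nat.fib n) : ℝ) /
          ((Nat.fib (Nat.fib (n + 1)) : ℝ) * (Nat.fib (Nat.fib (n + 2)) : ℝ))) =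
      (1 - Real.sqrt 5) / 2 := by
  have htend := summable_f.hasSum.tendsto_sum_nat
  have hpart : ∀ N, ∑ n ∈ Finset.range N, ((-1 : ℝ) ^ (Nat.fib (n + 1)) *
        ((Nat.fib (Nat.fib n) : ℝ) /
          ((Nat.fib (Nat.fib (n + 1)) : ℝ) * (Nat.fib (Nat.fib (n + 2)) : ℝ))))
      = gRatio 0 - gRatio N := by
    intro N
    rw [← Finset.sum_range_sub' gRatio N]
    exact Finset.sum_congr rfl fun n _ => term_eq n
  have hg0 : gRatio 0 = 1 := by
    unfold gRatio; norm_num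
  have hgR : Tendsto gRatio atTop (𝓝 Real.goldenRatio) := by
    have hcomp : Tendsto (fun N : ℕ => Nat.fib (N + 1)) atTop atTop := by
      apply tendsto_atTop_mono (fun N => ?_) tendsto_id
      simp only [id_eq]
      have h := Nat.le_fib_add_one (N + 1)
      omega
    exact fib_ratio_tendsto.comp hcomp
  have htend2 : Tendsto (fun N => ∑ n ∈ Finset.range N, ((-1 : ℝ) ^ (Nat.fib (n + 1)) *
        ((Nat.fib (Nat.fib n) : ℝ) /
          ((Nat.fib (Nat.fib (n + 1)) : ℝ) * (Nat.fib (Nat.fib (n + 2)) : ℝ)))))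
      atTop (𝓝 (1 - Real.goldenRatio)) := by
    simp only [hpart, hg0]
    exact hgR.const_sub 1
  have heq : (∑' n : ℕ, (-1 : ℝ) ^ (Nat.fib (n + 1)) *
        ((Nat.fib (Nat.fib n) : ℝ) /
          ((Nat.fib (Nat.fib (n + 1)) : ℝ) * (Nat.fib (Nat.fib (n + 2)) : ℝ))))
      = 1 - Real.goldenRatio := tendsto_nhds_unique htend htend2
  rw [heq]
  exact Real.one_sub_goldenConj
end

section
/- Let (u_n)_{n≥1} be an increasing arithmetic sequence of positive integers with common difference r ≥ 1. Then ∑_{n=1}^∞ (-1)^{(r-1)(n-1)} / (F_{u_n} · F_{u_{n+2}}) = 1 / (F_{u_1} · F_{u_2} · L_r). -/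
open Filter Finset Topology

/-- The Lucas sequence: `L_0 = 2`, `L_1 = 1`, `L_{n+2} = L_n + L_{n+1}`. -/
def lucas : ℕ → ℕ
  | 0 => 2
  | 1 => 1
  | n + 2 => lucas n + lucas (n + 1)

lemma lucas_pos : ∀ n, 0 < lucas n := by
  intro n
  induction n using Nat.twoStepInduction with
  | zero => norm_num [lucas]
  | one => norm_num [lucas]
  | more n ih1 ih2 => show 0 < lucas n + lucas (n+1); omega

lemma fib_lb : ∀ n : ℕ, (3/2 : ℝ)^n ≤ Nat.fib (n+2) := by
  intro n
  induction n using Nat.twoStepInduction with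
  | zero => norm_num
  | one => norm_num [Nat.fib]
  | more n ih1 ih2 =>
    have h : Nat.fib (n+4) = Nat.fib (n+2) + Nat.fib (n+3) := Nat.fib_add_two
    rw [show n+2+2 = n+4 from rfl, h]
    push_cast
    rw [pow_add]
    rw [pow_succ] at ih2
    nlinarith [pow_nonneg (by norm_num : (0:ℝ) ≤ 3/2) n]

lemma key : ∀ r m : ℕ, (Nat.fib (m + 2*r) : ℝ) + (-1)^r * Nat.fib m = (lucas r) * Nat.fib (m + r) := by
  intro r
  induction r using Nat.twoStepInduction with
  | zero => intro m; simp [lucas]; ring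
  | one =>
    intro m
    rw [show m + 2*1 = m+2 from rfl, Nat.fib_add_two]
    simp only [lucas]
    push_cast
    ring
  | more n ih1 ih2 =>
    intro m
    have h1 := ih1 (m+2)
    have h2 := ih2 (m+1)
    rw [show m+2+2*n = m+2*n+2 from by ring] at h1
    rw [show m+1+2*(n+1) = m+2*n+3 from by ring] at h2
    rw [show m+2*(n+2) = (m+2*n+2)+2 from by ring, Nat.fib_add_two]
    rw [show m+2+n = m+n+2 from by ring] at h1
    rw [show m+1+(n+1) = m+n+2 from by ring] at h2
    rw [show m+(n+2) = m+n+2 from by ring]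
    have hf : Nat.fib (m+2) = Nat.fib m + Nat.fib (m+1) := Nat.fib_add_two
    have hl : lucas (n+2) = lucas n + lucas (n+1) := rfl
    rw [hf] at h1
    rw [show m+2*n+2+1 = m+2*n+3 from rfl, hl]
    push_cast at h1 h2 ⊢
    ring_nf at h1 h2 ⊢
    linarith [h1, h2]

/-- Let `(u_n)_{n≥1}` be an increasing arithmetic sequence of positive
integers with common difference `r ≥ 1`. Then
`∑_{n=1}^∞ (-1)^{(r-1)(n-1)} / (F_{u_n} F_{u_{n+2}}) = 1 / (F_{u_1} F_{u_2} L_r)`. -/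
theorem statement13 (u : ℕ → ℕ) (r : ℕ) (hr : 1 ≤ r) (hu1 : 1 ≤ u 1)
    (harith : ∀ n, 1 ≤ n → u (n + 1) = u n + r) :
    ∑' n : ℕ, (-1 : ℝ) ^ ((r - 1) * n) /
        ((Nat.fib (u (n + 1)) : ℝ) * (Nat.fib (u (n + 3)) : ℝ)) =
      1 / ((Nat.fib (u 1) : ℝ) * (Nat.fib (u 2) : ℝ) * (lucas r : ℝ)) := by
  obtain ⟨s, rfl⟩ : ∃ s, r = s + 1 := ⟨r - 1, by omega⟩
  simp only [Nat.add_sub_cancel]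
  -- arithmetic formula
  have hu : ∀ n : ℕ, u (n+1) = u 1 + n * (s+1) := by
    intro n
    induction n with
    | zero => simp
    | succ n ih => rw [harith (n+1) (by omega), ih]; ring
  have hle : ∀ n : ℕ, n + 1 ≤ u (n+1) := by
    intro n
    have h1 : n * 1 ≤ n * (s+1) := Nat.mul_le_mul_left _ (by omega)
    rw [hu]; nlinarith
  have hposN : ∀ n : ℕ, 0 < Nat.fib (u (n+1)) :=
    fun n => Nat.fib_pos.mpr (by have := hle n; omega)
  have hpos : ∀ n : ℕ, (0:ℝ) < Nat.fib (u (n+1)) := fun n => by exact_mod_cast hposN n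
  have hlpos : (0:ℝ) < lucas (s+1) := by exact_mod_cast lucas_pos (s+1)
  have hfib_big : ∀ n k : ℕ, n + 2 ≤ k → (3/2:ℝ)^n ≤ Nat.fib (u k) := by
    intro n k hk
    obtain ⟨j, rfl⟩ : ∃ j, k = j + 1 := ⟨k - 1, by omega⟩
    calc (3/2:ℝ)^n ≤ Nat.fib (n+2) := fib_lb n
      _ ≤ Nat.fib (u (j+1)) := by
          exact_mod_cast Nat.fib_mono (le_trans (by omega) (hle j))
  set a : ℕ → ℝ := fun n => (-1:ℝ)^(s*n) / ((Nat.fib (u (n+1)) : ℝ) * (Nat.fib (u (n+3)) : ℝ)) with ha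
  set c : ℕ → ℝ := fun n => (-1:ℝ)^(s*n) /
      ((Nat.fib (u (n+1)) : ℝ) * (Nat.fib (u (n+2)) : ℝ) * (lucas (s+1) : ℝ)) with hc
  have hstep : ∀ n, a n = c n - c (n+1) := by
    intro n
    have e2 : u (n+2) = u (n+1) + (s+1) := harith (n+1) (by omega)
    have e3 : u (n+3) = u (n+2) + (s+1) := harith (n+2) (by omega)
    have e3' : u (n+3) = u (n+1) + 2*(s+1) := by rw [e3, e2]; ring
    have hk := key (s+1) (u (n+1))
    rw [← e3', ← e2] at hk
    have hA := hpos n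
    have hB := hpos (n+1)
    have hC := hpos (n+2)
    simp only [ha, hc]
    rw [show n+1+1 = n+2 from rfl, show n+1+2 = n+3 from rfl,
      show s*(n+1) = s*n + s from by ring, pow_add]
    rw [pow_succ] at hk
    have hA' : (Nat.fib (u (n+1)) : ℝ) ≠ 0 := ne_of_gt hA
    have hB' : (Nat.fib (u (n+2)) : ℝ) ≠ 0 := ne_of_gt hB
    have hC' : (Nat.fib (u (n+3)) : ℝ) ≠ 0 := ne_of_gt hC
    have hL' : (lucas (s+1) : ℝ) ≠ 0 := ne_of_gt hlpos
    field_simp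
    linear_combination (-1:ℝ) * hk
  have hLge : (1:ℝ) ≤ lucas (s+1) := by exact_mod_cast lucas_pos (s+1)
  have hnorm_a : ∀ n, ‖a n‖ ≤ (2/3:ℝ)^n := by
    intro n
    have hA := hpos n
    have hAge : (1:ℝ) ≤ Nat.fib (u (n+1)) := by exact_mod_cast hposN n
    have hC3 : (3/2:ℝ)^n ≤ Nat.fib (u (n+3)) := hfib_big n (n+3) (by omega)
    have hC : (0:ℝ) < Nat.fib (u (n+3)) := lt_of_lt_of_le (by positivity) hC3
    simp only [ha]
    rw [Real.norm_eq_abs, abs_div, abs_pow, abs_neg, abs_one, one_pow,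
      abs_of_pos (mul_pos hA hC)]
    rw [show (2/3:ℝ) = ((3/2)⁻¹) from by norm_num, inv_pow, ← one_div]
    apply one_div_le_one_div_of_le (by positivity)
    have h1 : (Nat.fib (u (n+3)) : ℝ) ≤ Nat.fib (u (n+1)) * Nat.fib (u (n+3)) :=
      le_mul_of_one_le_left hC.le hAge
    linarith
  have hnorm_c : ∀ n, ‖c n‖ ≤ (2/3:ℝ)^n := by
    intro n
    have hA := hpos n
    have hB := hpos (n+1)
    have hAge : (1:ℝ) ≤ Nat.fib (u (n+1)) := by exact_mod_cast hposN n
    have hB3 : (3/2:ℝ)^n ≤ Nat.fib (u (n+2)) := hfib_big n (n+2) (by omega)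
    have hB' : (0:ℝ) < Nat.fib (u (n+2)) := lt_of_lt_of_le (by positivity) hB3
    simp only [hc]
    rw [Real.norm_eq_abs, abs_div, abs_pow, abs_neg, abs_one, one_pow,
      abs_of_pos (mul_pos (mul_pos hA hB') hlpos)]
    rw [show (2/3:ℝ) = ((3/2)⁻¹) from by norm_num, inv_pow, ← one_div]
    apply one_div_le_one_div_of_le (by positivity)
    have h1 : (Nat.fib (u (n+2)) : ℝ) ≤ Nat.fib (u (n+1)) * Nat.fib (u (n+2)) :=
      le_mul_of_one_le_left hB'.le hAge
    have h2 : (Nat.fib (u (n+1)) : ℝ) * Nat.fib (u (n+2)) ≤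
        Nat.fib (u (n+1)) * Nat.fib (u (n+2)) * lucas (s+1) :=
      le_mul_of_one_le_right (by positivity) hLge
    linarith
  have hsum : Summable a := by
    apply Summable.of_norm
    apply Summable.of_nonneg_of_le (fun n => norm_nonneg _) hnorm_a
    exact summable_geometric_of_lt_one (by norm_num) (by norm_num)
  have hc0 : Tendsto c atTop (𝓝 0) :=
    squeeze_zero_norm hnorm_c
      (tendsto_pow_atTop_nhds_zero_of_lt_one (by norm_num) (by norm_num))
  have htel : Tendsto (fun N => ∑ i ∈ Finset.range N, a i) atTop (𝓝 (c 0)) := by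
    have he : (fun N => ∑ i ∈ Finset.range N, a i) = fun N => c 0 - c N := by
      funext N
      rw [← Finset.sum_range_sub' c N]
      exact Finset.sum_congr rfl (fun i _ => hstep i)
    rw [he]
    simpa using tendsto_const_nhds.sub hc0
  have heq : ∑' n, a n = c 0 := tendsto_nhds_unique hsum.hasSum.tendsto_sum_nat htel
  rw [heq]
  simp only [hc]
  norm_num
end
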